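/- Let a ∈ ℂ and let t, z ∈ ℂ satisfy t−z ∉ (−∞,0]. Define f(z,t) = e^{t²} (t−z)^{−a} using the principal branch of (t−z)^{−a}. Then ∂_z² f(z,t) − 2z ∂_z f(z,t) − 2a f(z,t) = −a ∂_t [ e^{t²} (t−z)^{−a−1} ]. -/

import Mathlib

open Complex

private lemma hermite_aux_hasderiv (t : ℂ) (k c : ℂ) (w : ℂ)
    (hw : (t - w) ∈ Complex.slitPlane) :
    HasDerivAt (fun w : ℂ => k * (t - w) ^ c) (k * (-c * (t - w) ^ (c - 1))) w := by
  have h1 : HasDerivAt (fun w : ℂ => t - w) (-1) w := by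
    simpa using (hasDerivAt_id w).const_sub t
  have h2 := (h1.cpow_const (c := c) hw).const_mul k
  rw [show k * (-c * (t - w) ^ (c - 1)) = k * (c * (t - w) ^ (c - 1) * -1) by ring]
  exact h2

/-- the Hermite operator applied in `z` to
`f(z,t) = e^(t²) (t-z)^(-a)` equals `-a ∂_t [ e^(t²) (t-z)^(-a-1) ]`. -/
theorem hermite_integrand_identity (a : ℂ) (t z : ℂ)
    (htz : (t - z) ∈ Complex.slitPlane) :
    deriv (deriv (fun w : ℂ => Complex.exp (t ^ 2) * (t - w) ^ (-a))) z
      - 2 * z * deriv (fun w : ℂ => Complex.exp (t ^ 2) * (t - w) ^ (-a)) z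
      - 2 * a * (Complex.exp (t ^ 2) * (t - z) ^ (-a))
    = -a * deriv (fun s : ℂ =>
        Complex.exp (s ^ 2) * (s - z) ^ (-a - 1)) t := by
  have hne : t - z ≠ 0 := Complex.slitPlane_ne_zero htz
  set E := Complex.exp (t ^ 2) with hE
  -- first derivative at z
  have hd1 : deriv (fun w : ℂ => E * (t - w) ^ (-a)) z
      = E * (a * (t - z) ^ (-a - 1)) := by
    have := (hermite_aux_hasderiv t E (-a) z htz).deriv
    simpa using this
  -- deriv f agrees with explicit formula near z
  have hev : deriv (fun w : ℂ => E * (t - w) ^ (-a))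
      =ᶠ[nhds z] fun w : ℂ => (E * a) * (t - w) ^ (-a - 1) := by
    have hopen : IsOpen {w : ℂ | (t - w) ∈ Complex.slitPlane} :=
      Complex.isOpen_slitPlane.preimage (by continuity)
    filter_upwards [hopen.mem_nhds htz] with w hw
    have := (hermite_aux_hasderiv t E (-a) w hw).deriv
    rw [this]; ring
  have hd2 : deriv (deriv (fun w : ℂ => E * (t - w) ^ (-a))) z
      = (E * a) * ((a + 1) * (t - z) ^ (-a - 1 - 1)) := by
    rw [hev.deriv_eq]
    have := (hermite_aux_hasderiv t (E * a) (-a - 1) z htz).deriv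
    rw [this]; ring
  -- derivative in t on the right-hand side
  have h3 : HasDerivAt (fun s : ℂ => Complex.exp (s ^ 2)) (E * (2 * t)) t := by
    have := (hasDerivAt_pow 2 t).cexp
    simpa [hE, mul_comm] using this
  have h4 : HasDerivAt (fun s : ℂ => (s - z) ^ (-a - 1))
      ((-a - 1) * (t - z) ^ (-a - 1 - 1)) t := by
    have := ((hasDerivAt_id t).sub_const z).cpow_const (c := -a - 1) htz
    simpa using this
  have hdr : deriv (fun s : ℂ => Complex.exp (s ^ 2) * (s - z) ^ (-a - 1)) t
      = E * (2 * t) * (t - z) ^ (-a - 1) + E * ((-a - 1) * (t - z) ^ (-a - 1 - 1)) :=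
    (h3.mul h4).deriv
  -- key algebraic identity
  have hC : (t - z) ^ (-a) = (t - z) ^ (-a - 1) * (t - z) := by
    rw [show -a = -a - 1 + 1 by ring, Complex.cpow_add _ _ hne, Complex.cpow_one]; ring_nf
  rw [hd1, hd2, hdr, hC]
  ring
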